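/- Let u : ℝⁿ → ℝⁿ be measurable and bounded with |u(x)| ≥ c₀ > 0 for a.e. x ∈ supp(u). Let 1 < p₁ ≤ r ≤ p₂ < ∞ with 1/r = σ/p₁ + (1-σ)/p₂ for some σ ∈ (0,1). Then ‖u‖_{L^{p₁}}^σ · ‖u‖_{L^{p₂}}^{1-σ} ≤ (‖u‖_{L^∞}/c₀)^{1-1/r} · ‖u‖_{L^r}. -/

import Mathlib

open MeasureTheory ENNReal

/-- For measurable bounded `u : ℝⁿ → ℝⁿ` with `|u(x)| ≥ c₀ > 0` a.e. on `supp u`, and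
`1 < p₁ ≤ r ≤ p₂ < ∞` with `1/r = σ/p₁ + (1-σ)/p₂`, `σ ∈ (0,1)`, one has
`‖u‖_{p₁}^σ ‖u‖_{p₂}^{1-σ} ≤ (‖u‖_∞/c₀)^{1-1/r} ‖u‖_r`. -/
theorem stmt1 {n : ℕ} (u : (Fin n → ℝ) → (Fin n → ℝ)) (hu : Measurable u)
    (hbd : eLpNorm u ⊤ volume < ⊤)
    (c₀ : ℝ) (hc₀ : 0 < c₀)
    (hlow : ∀ᵐ x ∂(volume : Measure (Fin n → ℝ)), x ∈ Function.support u → c₀ ≤ ‖u x‖)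
    (p₁ p₂ r σ : ℝ) (hp₁ : 1 < p₁) (hp₁r : p₁ ≤ r) (hrp₂ : r ≤ p₂)
    (hσ : σ ∈ Set.Ioo (0 : ℝ) 1)
    (hrel : 1 / r = σ / p₁ + (1 - σ) / p₂) :
    eLpNorm u (ENNReal.ofReal p₁) volume ^ σ
        * eLpNorm u (ENNReal.ofReal p₂) volume ^ (1 - σ)
      ≤ (eLpNorm u ⊤ volume / ENNReal.ofReal c₀) ^ (1 - 1 / r)
        * eLpNorm u (ENNReal.ofReal r) volume := by
  obtain ⟨hσ0, hσ1⟩ := hσ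
  have hp₁0 : (0:ℝ) < p₁ := lt_trans one_pos hp₁
  have hr0 : (0:ℝ) < r := lt_of_lt_of_le hp₁0 hp₁r
  have hr1 : (1:ℝ) < r := lt_of_lt_of_le hp₁ hp₁r
  have hp₂0 : (0:ℝ) < p₂ := lt_of_lt_of_le hr0 hrp₂
  have h1r : (0:ℝ) ≤ 1 - 1/r := by
    have : 1/r < 1 := by rw [div_lt_one hr0]; exact hr1
    linarith
  set μ : Measure (Fin n → ℝ) := volume with hμ
  set M := eLpNorm u ⊤ μ with hMdef
  set c' := ENNReal.ofReal c₀ with hc'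
  have hc'0 : c' ≠ 0 := (ENNReal.ofReal_pos.2 hc₀).ne'
  have hc't : c' ≠ ⊤ := ENNReal.ofReal_ne_top
  have hMt : M ≠ ⊤ := hbd.ne
  set f : (Fin n → ℝ) → ℝ≥0∞ := fun x => (‖u x‖₊ : ℝ≥0∞) with hfdef
  set I : ℝ → ℝ≥0∞ := fun p => ∫⁻ x, f x ^ p ∂μ with hIdef
  -- a.e. facts
  have hM : ∀ᵐ x ∂μ, f x ≤ M := by
    rw [hMdef, eLpNorm_exponent_top]
    exact enorm_ae_le_eLpNormEssSup u μ
  have hlow' : ∀ᵐ x ∂μ, x ∈ Function.support u → c' ≤ f x := by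
    filter_upwards [hlow] with x hx hxs
    calc c' ≤ ENNReal.ofReal ‖u x‖ := ENNReal.ofReal_le_ofReal (hx hxs)
    _ = f x := ofReal_norm (u x)
  -- the norms via lintegrals
  have hE : ∀ p : ℝ, 0 < p → eLpNorm u (ENNReal.ofReal p) μ = (I p) ^ (1/p) := by
    intro p hp
    rw [eLpNorm_eq_lintegral_rpow_enorm_toReal (ENNReal.ofReal_pos.2 hp).ne' ENNReal.ofReal_ne_top]
    simp_rw [ENNReal.toReal_ofReal hp.le]
    rfl
  -- lower-bound inequality
  have key1 : I p₁ ≤ c' ^ (p₁ - r) * I r := by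
    have hptw : ∀ᵐ x ∂μ, f x ^ p₁ ≤ c' ^ (p₁ - r) * f x ^ r := by
      filter_upwards [hlow'] with x hx
      by_cases hux : u x = 0
      · have hx0 : f x = 0 := by simp [hfdef, hux]
        rw [hx0, ENNReal.zero_rpow_of_pos hp₁0]
        exact zero_le
      · have h1 : c' ≤ f x := hx (Function.mem_support.2 hux)
        have hfx0 : f x ≠ 0 := fun h => hc'0 (le_antisymm (h ▸ h1) (zero_le))
        have hfxt : f x ≠ ⊤ := ENNReal.coe_ne_top
        have h2 : f x ^ (p₁ - r) ≤ c' ^ (p₁ - r) := by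
          rw [show p₁ - r = -(r - p₁) by ring, ENNReal.rpow_neg, ENNReal.rpow_neg]
          exact ENNReal.inv_le_inv.2 (ENNReal.rpow_le_rpow h1 (by linarith))
        calc f x ^ p₁ = f x ^ (p₁ - r) * f x ^ r := by
              rw [← ENNReal.rpow_add _ _ hfx0 hfxt]; ring_nf
        _ ≤ c' ^ (p₁ - r) * f x ^ r := mul_le_mul_left h2 _
    calc I p₁ ≤ ∫⁻ x, c' ^ (p₁ - r) * f x ^ r ∂μ := lintegral_mono_ae hptw
    _ = c' ^ (p₁ - r) * I r := by
        refine lintegral_const_mul' _ _ ?_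
        rw [show p₁ - r = -(r - p₁) by ring, ENNReal.rpow_neg]
        exact ENNReal.inv_ne_top.2 (by simp [ENNReal.rpow_eq_zero_iff, hc'0, hc't])
  -- upper-bound inequality
  have key2 : I p₂ ≤ M ^ (p₂ - r) * I r := by
    have hptw : ∀ᵐ x ∂μ, f x ^ p₂ ≤ M ^ (p₂ - r) * f x ^ r := by
      filter_upwards [hM] with x hx
      by_cases hux : u x = 0
      · have hx0 : f x = 0 := by simp [hfdef, hux]
        rw [hx0, ENNReal.zero_rpow_of_pos hp₂0]
        exact zero_le
      · have hfx0 : f x ≠ 0 := by simp [hfdef, hux]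
        have hfxt : f x ≠ ⊤ := ENNReal.coe_ne_top
        have h2 : f x ^ (p₂ - r) ≤ M ^ (p₂ - r) :=
          ENNReal.rpow_le_rpow hx (by linarith)
        calc f x ^ p₂ = f x ^ (p₂ - r) * f x ^ r := by
              rw [← ENNReal.rpow_add _ _ hfx0 hfxt]; ring_nf
        _ ≤ M ^ (p₂ - r) * f x ^ r := mul_le_mul_left h2 _
    calc I p₂ ≤ ∫⁻ x, M ^ (p₂ - r) * f x ^ r ∂μ := lintegral_mono_ae hptw
    _ = M ^ (p₂ - r) * I r := lintegral_const_mul' _ _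
        (ENNReal.rpow_ne_top_of_nonneg (by linarith) hMt)
  -- trivial case : r-norm is zero
  by_cases hZ : eLpNorm u (ENNReal.ofReal r) μ = 0
  · have hu0 : u =ᵐ[μ] 0 :=
      (eLpNorm_eq_zero_iff hu.aestronglyMeasurable (ENNReal.ofReal_pos.2 hr0).ne').1 hZ
    have h1 : eLpNorm u (ENNReal.ofReal p₁) μ = 0 :=
      (eLpNorm_eq_zero_iff hu.aestronglyMeasurable (ENNReal.ofReal_pos.2 hp₁0).ne').2 hu0
    rw [h1, ENNReal.zero_rpow_of_pos hσ0, zero_mul]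
    exact zero_le
  -- now c' ≤ M
  have hcM : c' ≤ M := by
    by_contra hlt
    push_neg at hlt
    have hu0 : u =ᵐ[μ] 0 := by
      filter_upwards [hM, hlow'] with x h1 h2
      by_contra hx
      exact absurd (le_trans (h2 (Function.mem_support.2 hx)) h1) (not_le.2 hlt)
    exact hZ ((eLpNorm_eq_zero_iff hu.aestronglyMeasurable
      (ENNReal.ofReal_pos.2 hr0).ne').2 hu0)
  have hM0 : M ≠ 0 := fun h => hc'0 (le_antisymm (h ▸ hcM) (zero_le))
  have hdiv1 : (1:ℝ≥0∞) ≤ M / c' := by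
    rw [ENNReal.le_div_iff_mul_le (Or.inl hc'0) (Or.inl hc't), one_mul]
    exact hcM
  have hpow1 : (1:ℝ≥0∞) ≤ (M/c')^(1-1/r) := by
    calc (1:ℝ≥0∞) = 1 ^ (1-1/r) := (ENNReal.one_rpow _).symm
    _ ≤ (M/c')^(1-1/r) := ENNReal.rpow_le_rpow hdiv1 h1r
  -- trivial case : r-norm is ⊤
  by_cases hT : eLpNorm u (ENNReal.ofReal r) μ = ⊤
  · rw [hT, ENNReal.mul_top (by intro h; rw [h] at hpow1; simp at hpow1)]
    exact le_top
  -- main case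
  have hIr0 : I r ≠ 0 := by
    intro h
    exact hZ (by rw [hE r hr0, h, ENNReal.zero_rpow_of_pos (by positivity)])
  have hIrt : I r ≠ ⊤ := by
    intro h
    exact hT (by rw [hE r hr0, h, ENNReal.top_rpow_of_pos (by positivity)])
  -- exponent arithmetic
  set a : ℝ := σ * (r / p₁ - 1) with ha
  have ha' : a = σ * r / p₁ - σ := by rw [ha]; ring
  have ha0 : 0 ≤ a := by
    have h1 : (1:ℝ) ≤ r / p₁ := (one_le_div hp₁0).2 hp₁r
    have h2 := hσ0.le
    nlinarith
  have e1 : σ * r / p₁ + (1 - σ) * r / p₂ = 1 := by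
    have h : r * (1/r) = r * (σ/p₁ + (1-σ)/p₂) := by rw [hrel]
    rw [mul_one_div, div_self hr0.ne', mul_add] at h
    calc σ*r/p₁ + (1-σ)*r/p₂ = r*(σ/p₁) + r*((1-σ)/p₂) := by ring
    _ = 1 := h.symm
  have hab : (p₂ - r) * ((1 - σ) / p₂) = a := by
    have h : (p₂ - r) * ((1 - σ)/p₂) = (1-σ) - (1-σ)*r/p₂ := by
      field_simp
    linarith
  have hac : (p₁ - r) * (σ / p₁) = -a := by
    have h : (p₁ - r) * (σ/p₁) = σ - σ*r/p₁ := by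
      field_simp
    linarith
  have har : a ≤ 1 - 1/r := by
    have h1 : σ / p₁ ≤ σ := div_le_self hσ0.le hp₁.le
    have h2 : (1 - σ)/p₂ ≤ (1-σ)*r/p₂ :=
      (div_le_div_iff_of_pos_right hp₂0).2 (le_mul_of_one_le_right (by linarith) hr1.le)
    linarith [hrel, e1, ha']
  -- final chain
  rw [hE p₁ hp₁0, hE p₂ hp₂0, hE r hr0]
  calc ((I p₁)^(1/p₁))^σ * ((I p₂)^(1/p₂))^(1-σ)
      = (I p₁)^((1/p₁)*σ) * (I p₂)^((1/p₂)*(1-σ)) := by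
        rw [← ENNReal.rpow_mul, ← ENNReal.rpow_mul]
    _ ≤ (c' ^ (p₁ - r) * I r)^((1/p₁)*σ) * (M ^ (p₂ - r) * I r)^((1/p₂)*(1-σ)) :=
        mul_le_mul'
          (ENNReal.rpow_le_rpow key1 (mul_nonneg (one_div_nonneg.2 hp₁0.le) hσ0.le))
          (ENNReal.rpow_le_rpow key2 (mul_nonneg (one_div_nonneg.2 hp₂0.le) (by linarith)))
    _ = (c' ^ (-a) * M ^ a) * ((I r)^((1/p₁)*σ) * (I r)^((1/p₂)*(1-σ))) := by
        rw [ENNReal.mul_rpow_of_nonneg _ _ (mul_nonneg (one_div_nonneg.2 hp₁0.le) hσ0.le),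
          ENNReal.mul_rpow_of_nonneg _ _ (mul_nonneg (one_div_nonneg.2 hp₂0.le) (by linarith)),
          ← ENNReal.rpow_mul c', ← ENNReal.rpow_mul M,
          show (p₁ - r) * ((1/p₁)*σ) = -a by rw [← hac]; ring,
          show (p₂ - r) * ((1/p₂)*(1-σ)) = a by rw [← hab]; ring]
        ring
    _ = (M/c')^a * (I r)^(1/r) := by
        rw [← ENNReal.rpow_add _ _ hIr0 hIrt,
          show (1/p₁)*σ + (1/p₂)*(1-σ) = 1/r by rw [hrel]; ring,
          ENNReal.div_rpow_of_nonneg _ _ ha0, ENNReal.rpow_neg]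
        simp only [div_eq_mul_inv]
        ring
    _ ≤ (M/c')^(1-1/r) * (I r)^(1/r) :=
        mul_le_mul_left (ENNReal.rpow_le_rpow_of_exponent_le hdiv1 har) _
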